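/- The mean squared width of an equilateral triangle with unit side in ℝ² equals (1/2)(1 + 3√3/(2π)), where the width w(u) is taken in a direction u uniform on the unit circle. -/

import Mathlib

open Real MeasureTheory intervalIntegral Metric Set
open scoped RealInnerProductSpace

local notation "E2" => EuclideanSpace ℝ (Fin 2)

noncomputable def uvec (c s : ℝ) : E2 := WithLp.toLp 2 ![c, s]

@[simp] lemma uvec0 (c s : ℝ) : uvec c s 0 = c := rfl
@[simp] lemma uvec1 (c s : ℝ) : uvec c s 1 = s := rfl

lemma norm_sq_E2 (x : E2) : ‖x‖^2 = (x 0)^2 + (x 1)^2 := by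
  rw [EuclideanSpace.norm_eq, Fin.sum_univ_two, Real.sq_sqrt (by positivity)]
  simp [sq_abs]

lemma step1 (F : E2 → ℝ) :
    ∫ u : Metric.sphere (0:E2) 1, F u ∂((volume : Measure E2).toSphere)
      = 2 * ∫ x in Metric.ball (0:E2) 1, F (‖x‖⁻¹ • x) := by
  have mp := (volume : Measure E2).measurePreserving_homeomorphUnitSphereProd
  set f : Metric.sphere (0:E2) 1 × Set.Ioi (0:ℝ) → ℝ :=
    fun q => F q.1 * Set.indicator (Set.Iio (1:ℝ)) (fun _ => (1:ℝ)) (q.2 : ℝ) with hf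
  have h1 : ∫ q, f q ∂(((volume : Measure E2).toSphere).prod
      (.volumeIoiPow (Module.finrank ℝ E2 - 1)))
      = (∫ u : Metric.sphere (0:E2) 1, F u ∂((volume : Measure E2).toSphere)) * (1/2) := by
    rw [hf, integral_prod_mul (f := fun u : Metric.sphere (0:E2) 1 => F u)
      (g := fun r : Set.Ioi (0:ℝ) => Set.indicator (Set.Iio (1:ℝ)) (fun _ => (1:ℝ)) (r:ℝ))]
    congr 1
    have hset : (fun r : Set.Ioi (0:ℝ) => Set.indicator (Set.Iio (1:ℝ)) (fun _ => (1:ℝ)) (r:ℝ))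
        = Set.indicator (Set.Iio (⟨1, Set.mem_Ioi.2 one_pos⟩ : Set.Ioi (0:ℝ)))
            (1 : Set.Ioi (0:ℝ) → ℝ) := by
      funext r
      by_cases h : (r : ℝ) < 1 <;>
        simp [Set.indicator_apply, Set.mem_Iio, h,
          show (r < (⟨1, Set.mem_Ioi.2 one_pos⟩ : Set.Ioi (0:ℝ))) ↔ (r:ℝ) < 1 from Iff.rfl,
          Pi.one_apply]
    have hms : MeasurableSet (Set.Iio (⟨1, Set.mem_Ioi.2 one_pos⟩ : Set.Ioi (0:ℝ))) := by
      have : Set.Iio (⟨1, Set.mem_Ioi.2 one_pos⟩ : Set.Ioi (0:ℝ))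
          = (Subtype.val : Set.Ioi (0:ℝ) → ℝ) ⁻¹' (Set.Iio 1) := by
        ext r
        simp [Set.mem_Iio,
          show (r < (⟨1, Set.mem_Ioi.2 one_pos⟩ : Set.Ioi (0:ℝ))) ↔ (r:ℝ) < 1 from Iff.rfl]
      rw [this]
      exact measurable_subtype_coe measurableSet_Iio
    rw [hset, MeasureTheory.integral_indicator_one hms]
    
    rw [show Module.finrank ℝ E2 - 1 = 1 by rw [finrank_euclideanSpace_fin]]
    rw [measureReal_def, Measure.volumeIoiPow_apply_Iio]
    norm_num
  have h2 : ∫ q, f q ∂(((volume : Measure E2).toSphere).prod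
      (.volumeIoiPow (Module.finrank ℝ E2 - 1)))
      = ∫ x in Metric.ball (0:E2) 1, F (‖x‖⁻¹ • x) := by
    rw [← mp.integral_comp (Homeomorph.measurableEmbedding _) f]
    have hfun : (fun x : ({(0:E2)}ᶜ : Set E2) => f (homeomorphUnitSphereProd _ x))
        = fun x : ({(0:E2)}ᶜ : Set E2) =>
          Set.indicator (Metric.ball (0:E2) 1) (fun y => F (‖y‖⁻¹ • y)) x.1 := by
      funext x
      by_cases h : ‖x.1‖ < 1
      · rw [Set.indicator_of_mem (by simpa [mem_ball_zero_iff] using h)]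
        simp [hf, homeomorphUnitSphereProd, Set.indicator_of_mem, h]
      · rw [Set.indicator_of_notMem (by simpa [mem_ball_zero_iff] using h)]
        simp [hf, homeomorphUnitSphereProd, Set.indicator_of_notMem, h]
    rw [hfun, integral_subtype_comap (measurableSet_singleton 0).compl
      (fun y => Set.indicator (Metric.ball (0:E2) 1) (fun y => F (‖y‖⁻¹ • y)) y),
      MeasureTheory.restrict_compl_singleton,
      MeasureTheory.integral_indicator measurableSet_ball]
  have h3 := h1.symm.trans h2
  linarith

lemma step2 (F : E2 → ℝ) :
    ∫ x in Metric.ball (0:E2) 1, F (‖x‖⁻¹ • x)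
      = (1/2) * ∫ θ in (-π)..π, F (uvec (cos θ) (sin θ)) := by
  set e : E2 ≃ᵐ ℝ × ℝ :=
    (MeasurableEquiv.toLp 2 (Fin 2 → ℝ)).symm.trans (MeasurableEquiv.finTwoArrow) with he
  have me : MeasurePreserving e volume volume :=
    (volume_preserving_finTwoArrow ℝ).comp (EuclideanSpace.volume_preserving_symm_measurableEquiv_toLp (Fin 2))
  set g : ℝ × ℝ → ℝ := fun v => Set.indicator {v : ℝ × ℝ | v.1^2 + v.2^2 < 1}
    (fun v => F (‖uvec v.1 v.2‖⁻¹ • uvec v.1 v.2)) v with hg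
  have hex : ∀ x : E2, (e x).1 = x 0 ∧ (e x).2 = x 1 := fun x => ⟨rfl, rfl⟩
  have hge : ∀ x : E2, g (e x)
      = Set.indicator (Metric.ball (0:E2) 1) (fun y => F (‖y‖⁻¹ • y)) x := by
    intro x
    have hx : uvec (e x).1 (e x).2 = x := by
      refine PiLp.ext fun i => ?_
      fin_cases i
      · exact (hex x).1
      · exact (hex x).2
    have hb : (e x).1^2 + (e x).2^2 < 1 ↔ x ∈ Metric.ball (0:E2) 1 := by
      rw [mem_ball_zero_iff, (hex x).1, (hex x).2, ← norm_sq_E2]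
      constructor <;> intro h <;> nlinarith [norm_nonneg x]
    by_cases h : x ∈ Metric.ball (0:E2) 1
    · rw [Set.indicator_of_mem h]
      have h1 : g (e x) = F (‖uvec (e x).1 (e x).2‖⁻¹ • uvec (e x).1 (e x).2) :=
        Set.indicator_of_mem (show e x ∈ {v : ℝ × ℝ | v.1^2 + v.2^2 < 1} from hb.2 h) _
      rw [h1, hx]
    · rw [Set.indicator_of_notMem h]
      exact Set.indicator_of_notMem (show e x ∉ {v : ℝ × ℝ | v.1^2 + v.2^2 < 1} from fun hc => h (hb.1 hc)) _
  calc ∫ x in Metric.ball (0:E2) 1, F (‖x‖⁻¹ • x)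
      = ∫ x : E2, Set.indicator (Metric.ball (0:E2) 1) (fun y => F (‖y‖⁻¹ • y)) x :=
        (MeasureTheory.integral_indicator measurableSet_ball).symm
    _ = ∫ x : E2, g (e x) := by simp_rw [hge]
    _ = ∫ v : ℝ × ℝ, g v := me.integral_comp e.measurableEmbedding g
    _ = ∫ p in polarCoord.target, p.1 • g (polarCoord.symm p) :=
        (integral_comp_polarCoord_symm g).symm
    _ = (1/2) * ∫ θ in (-π)..π, F (uvec (cos θ) (sin θ)) := ?_
  rw [show polarCoord.target = Set.Ioi (0:ℝ) ×ˢ Set.Ioo (-π) π from rfl]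
  rw [MeasureTheory.setIntegral_congr_fun
    (by exact (measurableSet_Ioi).prod measurableSet_Ioo)
    (g := fun p : ℝ × ℝ => (Set.indicator (Set.Ioo (0:ℝ) 1) id p.1)
      * F (uvec (cos p.2) (sin p.2))) ?_]
  · rw [MeasureTheory.Measure.volume_eq_prod, MeasureTheory.setIntegral_prod_mul (Set.indicator (Set.Ioo (0:ℝ) 1) id)
      (fun θ => F (uvec (cos θ) (sin θ))) (Set.Ioi 0) (Set.Ioo (-π) π)]
    congr 1
    · rw [MeasureTheory.setIntegral_indicator measurableSet_Ioo,
        Set.inter_eq_self_of_subset_right Set.Ioo_subset_Ioi_self,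
        ← MeasureTheory.integral_Ioc_eq_integral_Ioo,
        ← intervalIntegral.integral_of_le (by norm_num : (0:ℝ) ≤ 1)]
      rw [show (fun x : ℝ => id x) = fun x : ℝ => x from rfl, integral_id]
      norm_num
    · rw [← MeasureTheory.integral_Ioc_eq_integral_Ioo,
        ← intervalIntegral.integral_of_le (by linarith [Real.pi_pos] : (-π) ≤ π)]
  · rintro ⟨r, θ⟩ ⟨hr, hθ⟩
    simp only [Set.mem_Ioi] at hr
    have hsymm : polarCoord.symm (r, θ) = (r * cos θ, r * sin θ) := rfl
    show r • g (polarCoord.symm (r, θ))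
      = (Set.indicator (Set.Ioo (0:ℝ) 1) id r) * F (uvec (cos θ) (sin θ))
    rw [hsymm]
    have hn : ‖uvec (r * cos θ) (r * sin θ)‖ = r := by
      have h2 : ‖uvec (r * cos θ) (r * sin θ)‖^2 = r^2 := by
        rw [norm_sq_E2]; simp only [uvec0, uvec1]
        nlinarith [sin_sq_add_cos_sq θ]
      nlinarith [norm_nonneg (uvec (r * cos θ) (r * sin θ))]
    have hsm : ‖uvec (r * cos θ) (r * sin θ)‖⁻¹ • uvec (r * cos θ) (r * sin θ)
        = uvec (cos θ) (sin θ) := by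
      rw [hn]; refine PiLp.ext fun i => ?_; fin_cases i <;>
        simp [uvec, PiLp.smul_apply, smul_eq_mul] <;> field_simp
    have hcond : (r * cos θ)^2 + (r * sin θ)^2 = r^2 := by nlinarith [sin_sq_add_cos_sq θ]
    by_cases h : r < 1
    · have hm : ((r * cos θ, r * sin θ) : ℝ × ℝ) ∈ {v : ℝ × ℝ | v.1^2 + v.2^2 < 1} := by
        simp only [Set.mem_setOf_eq]; nlinarith
      have h1 : g (r * cos θ, r * sin θ)
          = F (‖uvec (r * cos θ) (r * sin θ)‖⁻¹ • uvec (r * cos θ) (r * sin θ)) :=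
        Set.indicator_of_mem hm _
      rw [h1, hsm, Set.indicator_of_mem (Set.mem_Ioo.2 ⟨hr, h⟩)]
      simp [smul_eq_mul]
    · have hm : ((r * cos θ, r * sin θ) : ℝ × ℝ) ∉ {v : ℝ × ℝ | v.1^2 + v.2^2 < 1} := by
        simp only [Set.mem_setOf_eq]; nlinarith
      have h1 : g (r * cos θ, r * sin θ) = 0 := Set.indicator_of_notMem hm _
      rw [h1, Set.indicator_of_notMem (by simp [Set.mem_Ioo, h]), smul_zero]
      simp


noncomputable def G (t : ℝ) : ℝ :=
  (max 0 (max (cos t) (cos (t - π/3))) - min 0 (min (cos t) (cos (t - π/3))))^2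

lemma G_cont : Continuous G := by unfold G; fun_prop

lemma key_diff (t : ℝ) : cos t - cos (t - π/3) = - sin (t - π/6) := by
  rw [Real.cos_sub, Real.sin_sub, Real.cos_pi_div_three, Real.sin_pi_div_three,
    Real.cos_pi_div_six, Real.sin_pi_div_six]; ring

-- cos t ≤ 0 for t in [π/2, 3π/2] or [-3π/2,-π/2]
lemma cos_np {t : ℝ} (h1 : π/2 ≤ t) (h2 : t ≤ π + π/2) : cos t ≤ 0 :=
  cos_nonpos_of_pi_div_two_le_of_le h1 h2

lemma cos_np' {t : ℝ} (h1 : -(π + π/2) ≤ t) (h2 : t ≤ -(π/2)) : cos t ≤ 0 := by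
  rw [← Real.cos_neg]; exact cos_nonpos_of_pi_div_two_le_of_le (by linarith) (by linarith)

lemma sin_nn' {t : ℝ} (h1 : -(2*π) ≤ t) (h2 : t ≤ π - 2*π) : 0 ≤ sin t := by
  rw [← Real.sin_add_two_pi]
  exact sin_nonneg_of_nonneg_of_le_pi (by linarith) (by linarith)

example : True := trivial

lemma v1 : cos (5*π/6) = -(Real.sqrt 3/2) := by
  rw [show (5*π/6:ℝ) = π - π/6 by ring, cos_pi_sub, cos_pi_div_six]
lemma v2 : sin (5*π/6) = 1/2 := by
  rw [show (5*π/6:ℝ) = π - π/6 by ring, sin_pi_sub, sin_pi_div_six]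
lemma v3 : cos (7*π/6) = -(Real.sqrt 3/2) := by
  rw [show (7*π/6:ℝ) = π - (-(π/6)) by ring, cos_pi_sub, cos_neg, cos_pi_div_six]
lemma v4 : sin (7*π/6) = -(1/2) := by
  rw [show (7*π/6:ℝ) = π - (-(π/6)) by ring, sin_pi_sub, sin_neg, sin_pi_div_six]
lemma v5 : cos (2*π/3) = -(1/2) := by
  rw [show (2*π/3:ℝ) = π - π/3 by ring, cos_pi_sub, cos_pi_div_three]
lemma v6 : sin (2*π/3) = Real.sqrt 3/2 := by
  rw [show (2*π/3:ℝ) = π - π/3 by ring, sin_pi_sub, sin_pi_div_three]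

lemma hiG : ∀ a b : ℝ, IntervalIntegrable G MeasureTheory.volume a b :=
  fun a b => (G_cont).intervalIntegrable a b

lemma I1 : ∫ t in (-π)..(-(5*π/6)), G t = Real.sqrt 3/8 + π/12 := by
  have pip := Real.pi_pos
  rw [integral_congr (g := fun t => cos t ^ 2) ?_, integral_cos_sq]
  · simp only [cos_neg, sin_neg, v1, v2, Real.cos_pi, Real.sin_pi]
    ring
  · intro t ht
    rw [Set.uIcc_of_le (by linarith)] at ht
    obtain ⟨h1, h2⟩ := ht
    have f1 : cos t ≤ 0 := cos_np' (by linarith) (by linarith)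
    have f2 : cos (t - π/3) ≤ 0 := cos_np' (by linarith) (by linarith)
    have f3 : cos t ≤ cos (t - π/3) := by
      have := sin_nn' (t := t - π/6) (by linarith) (by linarith)
      have := key_diff t; linarith
    show _ = _
    unfold G
    rw [max_eq_left (max_le f1 f2), min_eq_right (by rw [min_eq_left f3]; exact f1)]
    rw [min_eq_left f3]; ring

lemma I2 : ∫ t in (-(5*π/6))..(-(π/2)), G t = Real.sqrt 3/4 + π/6 := by
  have pip := Real.pi_pos
  rw [integral_congr (g := fun t => cos (t - π/3) ^ 2) ?_,
    integral_comp_sub_right (fun x => cos x ^ 2) (π/3),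
    show (-(5*π/6) - π/3 : ℝ) = -(7*π/6) by ring, show (-(π/2) - π/3 : ℝ) = -(5*π/6) by ring,
    integral_cos_sq]
  · simp only [cos_neg, sin_neg, v1, v2, v3, v4]
    ring
  · intro t ht
    rw [Set.uIcc_of_le (by linarith)] at ht
    obtain ⟨h1, h2⟩ := ht
    have f1 : cos t ≤ 0 := cos_np' (by linarith) (by linarith)
    have f2 : cos (t - π/3) ≤ 0 := cos_np' (by linarith) (by linarith)
    have f3 : cos (t - π/3) ≤ cos t := by
      have := sin_nonpos_of_nonpos_of_neg_pi_le (x := t - π/6) (by linarith) (by linarith)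
      have := key_diff t; linarith
    show _ = _
    unfold G
    rw [max_eq_left (max_le f1 f2), min_eq_right (by rw [min_eq_right f3]; exact f2),
      min_eq_right f3]
    ring

lemma I3 : ∫ t in (-(π/2))..(-(π/6)), G t = Real.sqrt 3/4 + π/6 := by
  have pip := Real.pi_pos
  rw [integral_congr (g := fun t => sin (t - π/6) ^ 2) ?_,
    integral_comp_sub_right (fun x => sin x ^ 2) (π/6),
    show (-(π/2) - π/6 : ℝ) = -(2*π/3) by ring, show (-(π/6) - π/6 : ℝ) = -(π/3) by ring,
    integral_sin_sq]
  · simp only [cos_neg, sin_neg, v5, v6, cos_pi_div_three, sin_pi_div_three]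
    ring
  · intro t ht
    rw [Set.uIcc_of_le (by linarith)] at ht
    obtain ⟨h1, h2⟩ := ht
    have f1 : 0 ≤ cos t := cos_nonneg_of_mem_Icc ⟨by linarith, by linarith⟩
    have f2 : cos (t - π/3) ≤ 0 := cos_np' (by linarith) (by linarith)
    show _ = _
    unfold G
    rw [max_eq_right (by rw [max_eq_left (f2.trans f1)]; exact f1), max_eq_left (f2.trans f1),
      min_eq_right (by rw [min_eq_right (f2.trans f1)]; exact f2), min_eq_right (f2.trans f1),
      key_diff t]
    ring

lemma I4 : ∫ t in (-(π/6))..(π/6), G t = Real.sqrt 3/4 + π/6 := by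
  have pip := Real.pi_pos
  rw [integral_congr (g := fun t => cos t ^ 2) ?_, integral_cos_sq]
  · simp only [cos_neg, sin_neg, cos_pi_div_six, sin_pi_div_six]
    ring
  · intro t ht
    rw [Set.uIcc_of_le (by linarith)] at ht
    obtain ⟨h1, h2⟩ := ht
    have f1 : 0 ≤ cos t := cos_nonneg_of_mem_Icc ⟨by linarith, by linarith⟩
    have f2 : 0 ≤ cos (t - π/3) := cos_nonneg_of_mem_Icc ⟨by linarith, by linarith⟩
    have f3 : cos (t - π/3) ≤ cos t := by
      have := sin_nonpos_of_nonpos_of_neg_pi_le (x := t - π/6) (by linarith) (by linarith)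
      have := key_diff t; linarith
    show _ = _
    unfold G
    rw [max_eq_right (by rw [max_eq_left f3]; exact f1), max_eq_left f3,
      min_eq_left (le_min f1 f2)]
    ring

lemma I5 : ∫ t in (π/6)..(π/2), G t = Real.sqrt 3/4 + π/6 := by
  have pip := Real.pi_pos
  rw [integral_congr (g := fun t => cos (t - π/3) ^ 2) ?_,
    integral_comp_sub_right (fun x => cos x ^ 2) (π/3),
    show (π/6 - π/3 : ℝ) = -(π/6) by ring, show (π/2 - π/3 : ℝ) = π/6 by ring,
    integral_cos_sq]
  · simp only [cos_neg, sin_neg, cos_pi_div_six, sin_pi_div_six]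
    ring
  · intro t ht
    rw [Set.uIcc_of_le (by linarith)] at ht
    obtain ⟨h1, h2⟩ := ht
    have f1 : 0 ≤ cos t := cos_nonneg_of_mem_Icc ⟨by linarith, by linarith⟩
    have f2 : 0 ≤ cos (t - π/3) := cos_nonneg_of_mem_Icc ⟨by linarith, by linarith⟩
    have f3 : cos t ≤ cos (t - π/3) := by
      have := sin_nonneg_of_nonneg_of_le_pi (x := t - π/6) (by linarith) (by linarith)
      have := key_diff t; linarith
    show _ = _
    unfold G
    rw [max_eq_right (by rw [max_eq_right f3]; exact f2), max_eq_right f3,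
      min_eq_left (le_min f1 f2)]
    ring

lemma I6 : ∫ t in (π/2)..(5*π/6), G t = Real.sqrt 3/4 + π/6 := by
  have pip := Real.pi_pos
  rw [integral_congr (g := fun t => sin (t - π/6) ^ 2) ?_,
    integral_comp_sub_right (fun x => sin x ^ 2) (π/6),
    show (π/2 - π/6 : ℝ) = π/3 by ring, show (5*π/6 - π/6 : ℝ) = 2*π/3 by ring,
    integral_sin_sq]
  · simp only [v5, v6, cos_pi_div_three, sin_pi_div_three]
    ring
  · intro t ht
    rw [Set.uIcc_of_le (by linarith)] at ht
    obtain ⟨h1, h2⟩ := ht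
    have f1 : cos t ≤ 0 := cos_np (by linarith) (by linarith)
    have f2 : 0 ≤ cos (t - π/3) := cos_nonneg_of_mem_Icc ⟨by linarith, by linarith⟩
    have hk : cos (t - π/3) - cos t = sin (t - π/6) := by have := key_diff t; linarith
    show _ = _
    unfold G
    rw [max_eq_right (by rw [max_eq_right (f1.trans f2)]; exact f2), max_eq_right (f1.trans f2),
      min_eq_right (by rw [min_eq_left (f1.trans f2)]; exact f1), min_eq_left (f1.trans f2)]
    rw [hk]

lemma I7 : ∫ t in (5*π/6)..π, G t = Real.sqrt 3/8 + π/12 := by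
  have pip := Real.pi_pos
  rw [integral_congr (g := fun t => cos t ^ 2) ?_, integral_cos_sq]
  · simp only [v1, v2, Real.cos_pi, Real.sin_pi]
    ring
  · intro t ht
    rw [Set.uIcc_of_le (by linarith)] at ht
    obtain ⟨h1, h2⟩ := ht
    have f1 : cos t ≤ 0 := cos_np (by linarith) (by linarith)
    have f2 : cos (t - π/3) ≤ 0 := cos_np (by linarith) (by linarith)
    have f3 : cos t ≤ cos (t - π/3) := by
      have := sin_nonneg_of_nonneg_of_le_pi (x := t - π/6) (by linarith) (by linarith)
      have := key_diff t; linarith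
    show _ = _
    unfold G
    rw [max_eq_left (max_le f1 f2), min_eq_right (by rw [min_eq_left f3]; exact f1),
      min_eq_left f3]
    ring

lemma intG : ∫ t in (-π)..π, G t = π + 3 * Real.sqrt 3 / 2 := by
  rw [← integral_add_adjacent_intervals (hiG (-π) (-(5*π/6))) (hiG (-(5*π/6)) π),
    ← integral_add_adjacent_intervals (hiG (-(5*π/6)) (-(π/2))) (hiG (-(π/2)) π),
    ← integral_add_adjacent_intervals (hiG (-(π/2)) (-(π/6))) (hiG (-(π/6)) π),
    ← integral_add_adjacent_intervals (hiG (-(π/6)) (π/6)) (hiG (π/6) π),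
    ← integral_add_adjacent_intervals (hiG (π/6) (π/2)) (hiG (π/2) π),
    ← integral_add_adjacent_intervals (hiG (π/2) (5*π/6)) (hiG (5*π/6) π),
    I1, I2, I3, I4, I5, I6, I7]
  ring

lemma sphere_to_interval (F : E2 → ℝ) :
    ∫ u : Metric.sphere (0:E2) 1, F u ∂((volume : Measure E2).toSphere)
      = ∫ θ in (-π)..π, F (uvec (cos θ) (sin θ)) := by
  rw [step1, step2]; ring

lemma total_toReal : (((volume : Measure E2).toSphere) Set.univ).toReal = 2*π := by
  have h := sphere_to_interval (fun _ => 1)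
  simp only [MeasureTheory.integral_const, intervalIntegral.integral_const, smul_eq_mul,
    mul_one] at h
  rw [← measureReal_def, h]; ring

lemma exists_angle (x y : ℝ) (h : x^2 + y^2 = 1) : ∃ t, cos t = x ∧ sin t = y := by
  have hz : (⟨x, y⟩ : ℂ) ≠ 0 := by
    intro h0
    rw [Complex.ext_iff] at h0
    simp only [Complex.zero_re, Complex.zero_im] at h0
    nlinarith [h0.1, h0.2]
  have habs : ‖(⟨x, y⟩ : ℂ)‖ = 1 := by
    rw [Complex.norm_def, Complex.normSq_mk, show x * x + y * y = 1 by nlinarith,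
      Real.sqrt_one]
  refine ⟨Complex.arg ⟨x, y⟩, ?_, ?_⟩
  · rw [Complex.cos_arg hz, habs]; simp
  · rw [Complex.sin_arg, habs]; simp

lemma Gper : Function.Periodic G (2*π) := by
  intro t
  unfold G
  rw [show t + 2*π - π/3 = (t - π/3) + 2*π by ring, Real.cos_add_two_pi, Real.cos_add_two_pi]

lemma angle_int (a0 a1 b0 b1 : ℝ) (ha : a0^2 + a1^2 = 1) (hb : b0^2 + b1^2 = 1)
    (hab : a0*b0 + a1*b1 = 1/2) :
    ∫ θ in (-π)..π, (max 0 (max (a0*cos θ + a1*sin θ) (b0*cos θ + b1*sin θ))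
      - min 0 (min (a0*cos θ + a1*sin θ) (b0*cos θ + b1*sin θ)))^2
      = π + 3 * Real.sqrt 3 / 2 := by
  obtain ⟨α, hα1, hα2⟩ := exists_angle a0 a1 ha
  obtain ⟨β, hβ1, hβ2⟩ := exists_angle b0 b1 hb
  have hA : ∀ θ, a0*cos θ + a1*sin θ = cos (θ - α) := fun θ => by
    rw [Real.cos_sub, hα1, hα2]; ring
  have hB : ∀ θ, b0*cos θ + b1*sin θ = cos (θ - β) := fun θ => by
    rw [Real.cos_sub, hβ1, hβ2]; ring
  have hδ : cos (α - β) = 1/2 := by rw [Real.cos_sub, hα1, hα2, hβ1, hβ2]; linarith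
  have h3 : (Real.sqrt 3)^2 = 3 := Real.sq_sqrt (by norm_num)
  have hsq : sin (α - β)^2 = 3/4 := by
    have := sin_sq_add_cos_sq (α - β); rw [hδ] at this; nlinarith
  have hcases : sin (α - β) = Real.sqrt 3/2 ∨ sin (α - β) = -(Real.sqrt 3/2) := by
    have hz : (sin (α - β) - Real.sqrt 3/2) * (sin (α - β) + Real.sqrt 3/2) = 0 := by nlinarith
    rcases mul_eq_zero.1 hz with h | h
    · left; linarith
    · right; linarith
  rcases hcases with hs | hs
  · -- β "=" α - π/3 : cos (θ - β) = cos ((α - θ) - π/3)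
    have hBB : ∀ θ, cos (θ - β) = cos ((α - θ) - π/3) := by
      intro θ
      rw [show θ - β = (θ - α) + (α - β) by ring, Real.cos_add, hδ, hs,
        Real.cos_sub (α - θ) (π/3), cos_pi_div_three, sin_pi_div_three,
        show α - θ = -(θ - α) by ring, Real.cos_neg, Real.sin_neg]
      ring
    have hpt : ∀ θ, (max 0 (max (a0*cos θ + a1*sin θ) (b0*cos θ + b1*sin θ))
        - min 0 (min (a0*cos θ + a1*sin θ) (b0*cos θ + b1*sin θ)))^2 = G (α - θ) := by
      intro θ
      unfold G
      rw [hA, hB, hBB, show cos (θ - α) = cos (α - θ) by rw [← Real.cos_neg]; ring_nf]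
    rw [intervalIntegral.integral_congr (g := fun θ => G (α - θ)) (fun θ _ => hpt θ)]
    rw [intervalIntegral.integral_comp_sub_left G α]
    rw [show α - -π = (α - π) + 2*π by ring]
    rw [Gper.intervalIntegral_add_eq (α - π) (-π), show (-π) + 2*π = π by ring, intG]
  · have hBB : ∀ θ, cos (θ - β) = cos ((θ - α) - π/3) := by
      intro θ
      rw [show θ - β = (θ - α) + (α - β) by ring, Real.cos_add, hδ, hs,
        Real.cos_sub (θ - α) (π/3), cos_pi_div_three, sin_pi_div_three]
      ring
    have hpt : ∀ θ, (max 0 (max (a0*cos θ + a1*sin θ) (b0*cos θ + b1*sin θ))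
        - min 0 (min (a0*cos θ + a1*sin θ) (b0*cos θ + b1*sin θ)))^2 = G (θ - α) := by
      intro θ
      unfold G
      rw [hA, hB, hBB]
    rw [intervalIntegral.integral_congr (g := fun θ => G (θ - α)) (fun θ _ => hpt θ)]
    rw [intervalIntegral.integral_comp_sub_right G α]
    rw [show π - α = (-π - α) + 2*π by ring]
    rw [Gper.intervalIntegral_add_eq (-π - α) (-π), show (-π) + 2*π = π by ring, intG]

lemma maxmin_shift (v0 v1 v2 : ℝ) : max v0 (max v1 v2) - min v0 (min v1 v2)
    = max 0 (max (v1-v0) (v2-v0)) - min 0 (min (v1-v0) (v2-v0)) := by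
  rw [show (0:ℝ) = v0 - v0 by ring, max_sub_sub_right v1 v2 v0, min_sub_sub_right v1 v2 v0,
    max_sub_sub_right v0 (max v1 v2) v0, min_sub_sub_right v0 (min v1 v2) v0]
  ring

/-- The mean squared width of an equilateral triangle with unit side length in `ℝ²` is `(1/2)(1 + 3√3/(2π))`. -/
theorem stmt12 (p : Fin 3 → EuclideanSpace ℝ (Fin 2))
    (hp : ∀ i j, i ≠ j → dist (p i) (p j) = 1)
    (C : Set (EuclideanSpace ℝ (Fin 2))) (hC : C = convexHull ℝ (Set.range p))
    (μ : Measure (Metric.sphere (0 : EuclideanSpace ℝ (Fin 2)) 1))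
    (hμ : μ = (volume : Measure (EuclideanSpace ℝ (Fin 2))).toSphere) :
    (∫ u : Metric.sphere (0 : EuclideanSpace ℝ (Fin 2)) 1,
        (sSup ((fun x => ⟪x, (u : EuclideanSpace ℝ (Fin 2))⟫) '' C)
          - sInf ((fun x => ⟪x, (u : EuclideanSpace ℝ (Fin 2))⟫) '' C))^2 ∂μ)
        / (μ Set.univ).toReal
      = (1/2) * (1 + 3 * Real.sqrt 3 / (2*π)) := by
  subst hC hμ
  have innerE : ∀ x y : E2, ⟪x, y⟫ = x 0 * y 0 + x 1 * y 1 := fun x y => by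
    simp [PiLp.inner_apply, RCLike.inner_apply, conj_trivial, Fin.sum_univ_two]; ring
  have hna : ‖p 1 - p 0‖ = 1 := by rw [← dist_eq_norm]; exact hp 1 0 (by decide)
  have hnb : ‖p 2 - p 0‖ = 1 := by rw [← dist_eq_norm]; exact hp 2 0 (by decide)
  have hnab : ‖(p 1 - p 0) - (p 2 - p 0)‖ = 1 := by
    rw [sub_sub_sub_cancel_right, ← dist_eq_norm]; exact hp 1 2 (by decide)
  have hinner : ⟪p 1 - p 0, p 2 - p 0⟫ = 1/2 := by
    have h := norm_sub_sq_real (p 1 - p 0) (p 2 - p 0)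
    rw [hna, hnb, hnab] at h; nlinarith
  have ha : ((p 1 - p 0) 0)^2 + ((p 1 - p 0) 1)^2 = 1 := by
    have h := norm_sq_E2 (p 1 - p 0); rw [hna] at h; nlinarith
  have hb : ((p 2 - p 0) 0)^2 + ((p 2 - p 0) 1)^2 = 1 := by
    have h := norm_sq_E2 (p 2 - p 0); rw [hnb] at h; nlinarith
  have hab : (p 1 - p 0) 0 * ((p 2 - p 0) 0) + (p 1 - p 0) 1 * ((p 2 - p 0) 1) = 1/2 := by
    rw [← innerE]; exact hinner
  have lin : ∀ u : E2, IsLinearMap ℝ (fun x : E2 => ⟪x, u⟫) := fun u =>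
    ⟨fun x y => inner_add_left x y u, fun c x => by simpa using real_inner_smul_left x u c⟩
  set F : E2 → ℝ := fun x =>
    (max 0 (max ⟪p 1 - p 0, x⟫ ⟪p 2 - p 0, x⟫)
      - min 0 (min ⟪p 1 - p 0, x⟫ ⟪p 2 - p 0, x⟫))^2 with hF
  have hfun : (fun u : Metric.sphere (0:E2) 1 =>
      (sSup ((fun x => ⟪x, (u : E2)⟫) '' (convexHull ℝ (Set.range p)))
        - sInf ((fun x => ⟪x, (u : E2)⟫) '' (convexHull ℝ (Set.range p))))^2)
      = fun u : Metric.sphere (0:E2) 1 => F ↑u := by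
    funext u
    have hSup : sSup ((fun x => ⟪x, (u : E2)⟫) '' (convexHull ℝ (Set.range p)))
        = max ⟪p 0, (u : E2)⟫ (max ⟪p 1, (u : E2)⟫ ⟪p 2, (u : E2)⟫) := by
      apply IsGreatest.csSup_eq
      constructor
      · have hex : ∃ i, max ⟪p 0, (u : E2)⟫ (max ⟪p 1, (u : E2)⟫ ⟪p 2, (u : E2)⟫)
            = ⟪p i, (u : E2)⟫ := by
          rcases max_choice (⟪p 0, (u : E2)⟫) (max ⟪p 1, (u : E2)⟫ ⟪p 2, (u : E2)⟫) with h | h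
          · exact ⟨0, h⟩
          · rcases max_choice (⟪p 1, (u : E2)⟫) (⟪p 2, (u : E2)⟫) with h2 | h2
            · exact ⟨1, by rw [h, h2]⟩
            · exact ⟨2, by rw [h, h2]⟩
        obtain ⟨i, hi⟩ := hex
        exact ⟨p i, subset_convexHull ℝ _ (Set.mem_range_self i), hi.symm⟩
      · rintro y ⟨x, hx, rfl⟩
        have hsub : convexHull ℝ (Set.range p) ⊆
            {z : E2 | ⟪z, (u : E2)⟫
              ≤ max ⟪p 0, (u : E2)⟫ (max ⟪p 1, (u : E2)⟫ ⟪p 2, (u : E2)⟫)} := by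
          apply convexHull_min ?_ (convex_halfSpace_le (lin _) _)
          rintro z ⟨i, rfl⟩
          fin_cases i <;> simp only [Set.mem_setOf_eq]
          · exact le_max_left _ _
          · exact le_trans (le_max_left _ _) (le_max_right _ _)
          · exact le_trans (le_max_right _ _) (le_max_right _ _)
        exact hsub hx
    have hInf : sInf ((fun x => ⟪x, (u : E2)⟫) '' (convexHull ℝ (Set.range p)))
        = min ⟪p 0, (u : E2)⟫ (min ⟪p 1, (u : E2)⟫ ⟪p 2, (u : E2)⟫) := by
      apply IsLeast.csInf_eq
      constructor
      · have hex : ∃ i, min ⟪p 0, (u : E2)⟫ (min ⟪p 1, (u : E2)⟫ ⟪p 2, (u : E2)⟫)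
            = ⟪p i, (u : E2)⟫ := by
          rcases min_choice (⟪p 0, (u : E2)⟫) (min ⟪p 1, (u : E2)⟫ ⟪p 2, (u : E2)⟫) with h | h
          · exact ⟨0, h⟩
          · rcases min_choice (⟪p 1, (u : E2)⟫) (⟪p 2, (u : E2)⟫) with h2 | h2
            · exact ⟨1, by rw [h, h2]⟩
            · exact ⟨2, by rw [h, h2]⟩
        obtain ⟨i, hi⟩ := hex
        exact ⟨p i, subset_convexHull ℝ _ (Set.mem_range_self i), hi.symm⟩
      · rintro y ⟨x, hx, rfl⟩
        have hsub : convexHull ℝ (Set.range p) ⊆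
            {z : E2 | min ⟪p 0, (u : E2)⟫ (min ⟪p 1, (u : E2)⟫ ⟪p 2, (u : E2)⟫)
              ≤ ⟪z, (u : E2)⟫} := by
          apply convexHull_min ?_ (convex_halfSpace_ge (lin _) _)
          rintro z ⟨i, rfl⟩
          fin_cases i <;> simp only [Set.mem_setOf_eq]
          · exact min_le_left _ _
          · exact le_trans (min_le_right _ _) (min_le_left _ _)
          · exact le_trans (min_le_right _ _) (min_le_right _ _)
        exact hsub hx
    rw [hSup, hInf, maxmin_shift, ← inner_sub_left, ← inner_sub_left]
  rw [hfun, sphere_to_interval F, total_toReal]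
  have hpt : ∀ θ : ℝ, F (uvec (cos θ) (sin θ))
      = (max 0 (max ((p 1 - p 0) 0 * cos θ + (p 1 - p 0) 1 * sin θ)
          ((p 2 - p 0) 0 * cos θ + (p 2 - p 0) 1 * sin θ))
        - min 0 (min ((p 1 - p 0) 0 * cos θ + (p 1 - p 0) 1 * sin θ)
          ((p 2 - p 0) 0 * cos θ + (p 2 - p 0) 1 * sin θ)))^2 := by
    intro θ
    have h1 := innerE (p 1 - p 0) (uvec (cos θ) (sin θ))
    have h2 := innerE (p 2 - p 0) (uvec (cos θ) (sin θ))
    rw [uvec0, uvec1] at h1 h2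
    show (max 0 (max ⟪p 1 - p 0, uvec (cos θ) (sin θ)⟫ ⟪p 2 - p 0, uvec (cos θ) (sin θ)⟫)
      - min 0 (min ⟪p 1 - p 0, uvec (cos θ) (sin θ)⟫ ⟪p 2 - p 0, uvec (cos θ) (sin θ)⟫))^2 = _
    rw [h1, h2]
  rw [intervalIntegral.integral_congr (fun θ _ => hpt θ),
    angle_int _ _ _ _ ha hb hab]
  have hπ : π ≠ 0 := Real.pi_ne_zero
  field_simp
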